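/- With A and B as above, the product A × B in the category of 2-degenerate 3-computads is not isomorphic to the pointwise product (which would have only one 3-cell): the product object necessarily has exactly two 3-cells. -/
import Mathlib


open CategoryTheory

/-- A 2-degenerate 3-computad: a single 0-cell, no 1-cells, so the data is a set of
2-cells, a set of 3-cells, and boundary maps into the free commutative monoid
(multisets) on the 2-cells. -/
structure DegComputad where
  C2 : Type
  C3 : Type
  src : C3 → Multiset C2
  tgt : C3 → Multiset C2

/-- Morphisms of 2-degenerate 3-computads. -/
@[ext]
structure DegComputad.Hom (A B : DegComputad) where
  f2 : A.C2 → B.C2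
  f3 : A.C3 → B.C3
  src_comm : ∀ e, B.src (f3 e) = Multiset.map f2 (A.src e)
  tgt_comm : ∀ e, B.tgt (f3 e) = Multiset.map f2 (A.tgt e)

instance : Category DegComputad where
  Hom := DegComputad.Hom
  id A := ⟨id, id, by simp, by simp⟩
  comp f g := ⟨g.f2 ∘ f.f2, g.f3 ∘ f.f3,
    by intro e; simp [f.src_comm, g.src_comm, Multiset.map_map],
    by intro e; simp [f.tgt_comm, g.tgt_comm, Multiset.map_map]⟩

@[simp] lemma DegComputad.id_f2 (A : DegComputad) : (𝟙 A : A ⟶ A).f2 = id := rfl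
@[simp] lemma DegComputad.id_f3 (A : DegComputad) : (𝟙 A : A ⟶ A).f3 = id := rfl
@[simp] lemma DegComputad.comp_f2 {A B C : DegComputad} (f : A ⟶ B) (g : B ⟶ C) :
    (f ≫ g).f2 = g.f2 ∘ f.f2 := rfl
@[simp] lemma DegComputad.comp_f3 {A B C : DegComputad} (f : A ⟶ B) (g : B ⟶ C) :
    (f ≫ g).f3 = g.f3 ∘ f.f3 := rfl
/-- The computad `A`: 2-cells `a₁,a₂,a₃` (as `0,1,2`), one 3-cell `f : a₁·a₂ → a₃`. -/
abbrev CompA : DegComputad := ⟨Fin 3, Unit, fun _ => {0, 1}, fun _ => {2}⟩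

/-- The computad `B`: an isomorphic copy of `A`, with 2-cells `b₁,b₂,b₃` and
one 3-cell `g : b₁·b₂ → b₃`. -/
abbrev CompB : DegComputad := ⟨Fin 3, Unit, fun _ => {0, 1}, fun _ => {2}⟩

/-- The putative product `A × B`: nine 2-cells `(aᵢ,bⱼ)` and two 3-cells
`(f,g)₁ : (a₁,b₁)·(a₂,b₂) → (a₃,b₃)` and `(f,g)₂ : (a₂,b₁)·(a₁,b₂) → (a₃,b₃)`. -/
abbrev CompAB : DegComputad :=
  ⟨Fin 3 × Fin 3, Fin 2,
   fun e => if e = 0 then {((0 : Fin 3), (0 : Fin 3)), (1, 1)} else {(1, 0), (0, 1)},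
   fun _ => {(2, 2)}⟩

/-- First projection `A × B ⟶ A`. -/
def projA : CompAB ⟶ CompA :=
  ⟨Prod.fst, fun _ => (), by decide, by decide⟩

/-- Second projection `A × B ⟶ B`. -/
def projB : CompAB ⟶ CompB :=
  ⟨Prod.snd, fun _ => (), by decide, by decide⟩

open CategoryTheory.Limits

section Aux
open Multiset

lemma pair_eq_pair' {α : Type*} {a b c d : α} (h : ({a, b} : Multiset α) = {c, d}) :
    (a = c ∧ b = d) ∨ (a = d ∧ b = c) := by
  have h' : a ::ₘ ({b} : Multiset α) = c ::ₘ {d} := h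
  rcases (Multiset.cons_eq_cons).mp h' with ⟨h1, h2⟩ | ⟨hne, cs, h1, h2⟩
  · exact Or.inl ⟨h1, Multiset.singleton_inj.mp h2⟩
  · have hcs : cs = 0 := by
      have h3 := congrArg Multiset.card h1
      simp at h3
      exact h3
    subst hcs
    simp at h1 h2
    exact Or.inr ⟨h2.symm, h1⟩

lemma src_pair (T : DegComputad) (f : T ⟶ CompA) (g : T ⟶ CompB) (e : T.C3) :
    (T.src e).map (fun x => (f.f2 x, g.f2 x)) = {((0 : Fin 3), (0 : Fin 3)), (1, 1)} ∨
    (T.src e).map (fun x => (f.f2 x, g.f2 x)) = {((1 : Fin 3), (0 : Fin 3)), (0, 1)} := by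
  have hf := f.src_comm e
  have hg := g.src_comm e
  have hc : Multiset.card (T.src e) = 2 := by
    have := congrArg Multiset.card hf
    simpa using this.symm
  obtain ⟨x, y, hxy⟩ := Multiset.card_eq_two.mp hc
  rw [hxy] at hf hg ⊢
  simp only [Multiset.insert_eq_cons, Multiset.map_cons, Multiset.map_singleton] at hf hg ⊢
  rcases pair_eq_pair' hf.symm with ⟨h1, h2⟩ | ⟨h1, h2⟩ <;>
    rcases pair_eq_pair' hg.symm with ⟨h3, h4⟩ | ⟨h3, h4⟩ <;>
      rw [h1, h2, h3, h4] <;> first | (left; decide) | (right; decide)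

lemma tgt_pair (T : DegComputad) (f : T ⟶ CompA) (g : T ⟶ CompB) (e : T.C3) :
    (T.tgt e).map (fun x => (f.f2 x, g.f2 x)) = {((2 : Fin 3), (2 : Fin 3))} := by
  have hf := f.tgt_comm e
  have hg := g.tgt_comm e
  have hc : Multiset.card (T.tgt e) = 1 := by
    have := congrArg Multiset.card hf
    simpa using this.symm
  obtain ⟨z, hz⟩ := Multiset.card_eq_one.mp hc
  rw [hz] at hf hg ⊢
  simp only [Multiset.map_singleton] at hf hg ⊢
  rw [Multiset.singleton_inj.mp hf.symm, Multiset.singleton_inj.mp hg.symm]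

/-- The mediating morphism into `CompAB`. -/
def mkHom (T : DegComputad) (f : T ⟶ CompA) (g : T ⟶ CompB) : T ⟶ CompAB where
  f2 := fun x => (f.f2 x, g.f2 x)
  f3 := fun e =>
    if (T.src e).map (fun x => (f.f2 x, g.f2 x)) = {((0 : Fin 3), (0 : Fin 3)), (1, 1)}
    then 0 else 1
  src_comm := by
    intro e
    show CompAB.src (if (T.src e).map (fun x => (f.f2 x, g.f2 x))
        = {((0 : Fin 3), (0 : Fin 3)), (1, 1)} then 0 else 1)
      = (T.src e).map (fun x => (f.f2 x, g.f2 x))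
    by_cases hc : (T.src e).map (fun x => (f.f2 x, g.f2 x)) = {((0 : Fin 3), (0 : Fin 3)), (1, 1)}
    · rw [if_pos hc, hc]
      decide
    · rcases src_pair T f g e with h | h
      · exact absurd h hc
      · rw [if_neg hc, h]
        decide
  tgt_comm := fun e => (tgt_pair T f g e).symm

lemma mkHom_fst (T : DegComputad) (f : T ⟶ CompA) (g : T ⟶ CompB) :
    mkHom T f g ≫ projA = f := by
  apply DegComputad.Hom.ext
  · rfl
  · funext e
    exact Subsingleton.elim _ _

lemma mkHom_snd (T : DegComputad) (f : T ⟶ CompA) (g : T ⟶ CompB) :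
    mkHom T f g ≫ projB = g := by
  apply DegComputad.Hom.ext
  · rfl
  · funext e
    exact Subsingleton.elim _ _

lemma mkHom_uniq (T : DegComputad) (f : T ⟶ CompA) (g : T ⟶ CompB) (m : T ⟶ CompAB)
    (h1 : m ≫ projA = f) (h2 : m ≫ projB = g) : m = mkHom T f g := by
  have hf2 : m.f2 = fun x => (f.f2 x, g.f2 x) := by
    funext x
    have e1 : Prod.fst (m.f2 x) = f.f2 x := congrFun (congrArg DegComputad.Hom.f2 h1) x
    have e2 : Prod.snd (m.f2 x) = g.f2 x := congrFun (congrArg DegComputad.Hom.f2 h2) x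
    exact Prod.ext e1 e2
  apply DegComputad.Hom.ext
  · exact hf2
  · funext e
    have hs : CompAB.src (m.f3 e) = (T.src e).map (fun x => (f.f2 x, g.f2 x)) := by
      rw [m.src_comm e, hf2]
    show m.f3 e = if (T.src e).map (fun x => (f.f2 x, g.f2 x))
        = {((0 : Fin 3), (0 : Fin 3)), (1, 1)} then 0 else 1
    rcases (by decide : ∀ v : Fin 2, v = 0 ∨ v = 1) (m.f3 e) with h3 | h3 <;> rw [h3] at hs ⊢
    · have hcond : (T.src e).map (fun x => (f.f2 x, g.f2 x))
          = {((0 : Fin 3), (0 : Fin 3)), (1, 1)} :=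
        hs.symm.trans (by decide)
      rw [if_pos hcond]
    · have hcond : ¬ (T.src e).map (fun x => (f.f2 x, g.f2 x))
          = {((0 : Fin 3), (0 : Fin 3)), (1, 1)} := by
        intro hmap
        have : CompAB.src 1 = {((0 : Fin 3), (0 : Fin 3)), (1, 1)} := hs.trans hmap
        exact absurd this (by decide)
      rw [if_neg hcond]

/-- `CompAB` with the two projections is a binary product of `CompA` and `CompB`. -/
def ABisLimit : IsLimit (BinaryFan.mk projA projB) :=
  BinaryFan.isLimitMk (fun s => mkHom s.pt s.fst s.snd)
    (fun s => mkHom_fst s.pt s.fst s.snd)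
    (fun s => mkHom_snd s.pt s.fst s.snd)
    (fun s m h1 h2 => mkHom_uniq s.pt s.fst s.snd m h1 h2)

/-- An isomorphism of computads induces an equivalence on 3-cells. -/
def isoC3 {X Y : DegComputad} (i : X ≅ Y) : X.C3 ≃ Y.C3 where
  toFun := i.hom.f3
  invFun := i.inv.f3
  left_inv x := congrFun (congrArg DegComputad.Hom.f3 i.hom_inv_id) x
  right_inv y := congrFun (congrArg DegComputad.Hom.f3 i.inv_hom_id) y

end Aux


/-- The product of `A` and `B` (each having one 3-cell) in the category of 2-degenerate
3-computads necessarily has exactly two 3-cells; in particular its 3-cell set is not in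
bijection with `A.C3 × B.C3` (a singleton), so the product is not isomorphic to the
pointwise product. -/
theorem stmt4 (P : DegComputad) (p : P ⟶ CompA) (q : P ⟶ CompB)
    (h : Nonempty (IsLimit (BinaryFan.mk p q))) :
    Nonempty (P.C3 ≃ Fin 2) ∧ ¬ Nonempty (P.C3 ≃ CompA.C3 × CompB.C3) := by
  obtain ⟨hl⟩ := h
  have i : P ≅ CompAB := hl.conePointUniqueUpToIso ABisLimit
  have eqv : P.C3 ≃ Fin 2 := isoC3 i
  refine ⟨⟨eqv⟩, ?_⟩
  rintro ⟨ev⟩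
  have w : Fin 2 ≃ Unit × Unit := eqv.symm.trans ev
  have : (0 : Fin 2) = 1 := w.injective (Subsingleton.elim _ _)
  exact absurd this (by decide)
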